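/- For every n ≥ 0, |σ^{q^n}/D_n| = q^{−1/(q−1)}, where σ^{q−1} = −x and D_n is the Carlitz factorial. -/
import Mathlib

lemma na_norm_sub_eq' {C : Type*} [NormedField C]
    (hna : IsNonarchimedean (‖·‖ : C → ℝ)) {a b : C} (h : ‖a‖ < ‖b‖) :
    ‖b - a‖ = ‖b‖ := by
  have h1 : ‖b - a‖ ≤ max ‖b‖ ‖a‖ := by
    simpa [sub_eq_add_neg] using hna b (-a)
  have h2 : ‖b‖ ≤ max ‖b - a‖ ‖a‖ := by
    simpa using hna (b - a) a
  have hle : ‖b - a‖ ≤ ‖b‖ := h1.trans (by simp [h.le])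
  rcases lt_or_eq_of_le hle with hlt | heq
  · exact absurd h2 (not_le.mpr (max_lt hlt h))
  · exact heq

/-- with `σ^{q-1} = -x` and `D_n` the Carlitz factorial,
`|σ^{q^n}/D_n| = q^{-1/(q-1)}` for every `n ≥ 0`. -/
theorem sigma_pow_div_D_abs {C : Type*} [NormedField C]
    (hna : IsNonarchimedean (‖·‖ : C → ℝ))
    (q : ℕ) (p m : ℕ) (hp : p.Prime) (hm : 0 < m) (hqpm : q = p ^ m) (hq : 1 < q)
    (x : C) (hx : ‖x‖ = (q : ℝ)⁻¹)
    (σ : C) (hσ : σ ^ (q - 1) = -x)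
    (D : ℕ → C) (hD0 : D 0 = 1)
    (hD : ∀ n : ℕ, D (n + 1) = (x ^ q ^ (n + 1) - x) * (D n) ^ q) :
    ∀ n : ℕ, ‖σ ^ q ^ n / D n‖ = (q : ℝ) ^ (-(1 / ((q : ℝ) - 1))) := by
  have hq1 : (1:ℝ) < (q:ℝ) := by exact_mod_cast hq
  have hq0 : (0:ℝ) < (q:ℝ) := lt_trans one_pos hq1
  have hrne : (q:ℝ) - 1 ≠ 0 := sub_ne_zero.mpr hq1.ne'
  have hsubcast : ((q - 1 : ℕ) : ℝ) = (q:ℝ) - 1 := by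
    push_cast [Nat.cast_sub hq.le]; ring
  have hσn : ‖σ‖ ^ (q - 1) = (q:ℝ)⁻¹ := by
    have := congrArg norm hσ
    rwa [norm_pow, norm_neg, hx] at this
  have hσr : ‖σ‖ = (q:ℝ) ^ (-(1 / ((q:ℝ) - 1))) := by
    have hn : (0:ℝ) < ((q - 1 : ℕ):ℝ) := by
      have : 0 < q - 1 := by omega
      exact_mod_cast this
    have e1 : ‖σ‖ = ((q:ℝ)⁻¹) ^ (((q - 1 : ℕ):ℝ))⁻¹ := by
      rw [← hσn, ← Real.rpow_natCast ‖σ‖ (q - 1), ← Real.rpow_mul (norm_nonneg σ),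
        mul_inv_cancel₀ hn.ne', Real.rpow_one]
    rw [e1, Real.inv_rpow hq0.le, ← Real.rpow_neg hq0.le]
    congr 1
    rw [hsubcast, one_div]
  have hDn : ∀ n : ℕ, ‖D n‖ = (q:ℝ) ^ (-(((q:ℝ)^n - 1)/((q:ℝ)-1))) := by
    intro n
    induction n with
    | zero => simp [hD0]
    | succ n ih =>
      have hxq : ‖x ^ q ^ (n+1)‖ < ‖x‖ := by
        rw [norm_pow, hx]
        have hlt1 : (q:ℝ)⁻¹ < 1 := inv_lt_one_of_one_lt₀ hq1
        have h1q : 1 < q ^ (n+1) := Nat.one_lt_pow (by omega) hq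
        calc (q:ℝ)⁻¹ ^ (q ^ (n+1)) < (q:ℝ)⁻¹ ^ 1 :=
              pow_lt_pow_right_of_lt_one₀ (by positivity) hlt1 h1q
          _ = (q:ℝ)⁻¹ := pow_one _
      have hsubnorm : ‖x ^ q ^ (n+1) - x‖ = ‖x‖ := (norm_sub_rev _ _).trans (na_norm_sub_eq' hna hxq)
      rw [hD n, norm_mul, hsubnorm, hx, norm_pow, ih,
        ← Real.rpow_natCast ((q:ℝ) ^ (-(((q:ℝ)^n - 1)/((q:ℝ)-1)))) q,
        ← Real.rpow_mul hq0.le, ← Real.rpow_neg_one (q:ℝ),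
        ← Real.rpow_add hq0]
      congr 1
      push_cast
      field_simp
      ring
  intro n
  rw [norm_div, norm_pow, hσr, hDn n, ← Real.rpow_natCast ((q:ℝ) ^ (-(1 / ((q:ℝ) - 1)))) (q ^ n),
    ← Real.rpow_mul hq0.le, ← Real.rpow_sub hq0]
  congr 1
  push_cast
  field_simp
  ring
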